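/- The Möbius transformation μ(X) = (-1 + √-3 + (3 - √-3)X)/(2√-3 + 6(1 - √-3)X) over ℚ(√-3) maps the sextic F(X) to its complex conjugate: F̄(μ(X))·(2√-3 + 6(1-√-3)X)⁶ = (24√-3)²·F(X) up to the exact constant making Y² = F(X) transform to Ȳ² = F̄(X̄) under (X,Y) ↦ (μ(X), 24√-3·Y/(2√-3+6(1-√-3)X)³). -/

import Mathlib

/-- The sextic F(X) defining the curve C of level 243, with √-3 as a parameter s. -/
noncomputable def sexticF (s x : ℂ) : ℂ :=
  (4 * (3 - 2 * s) / 9) * x ^ 6 + (8 * (-1 + s) / 3) * x ^ 5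
    + (4 * (3 - 7 * s) / 9) * x ^ 4 + (2 * (7 + 23 * s) / 27) * x ^ 3
    - ((11 + 7 * s) / 18) * x ^ 2 + ((15 + s) / 108) * x + (-2 + s) / 324

/-- The Möbius transformation μ(X) = (-1 + √-3 + (3 - √-3)X)/(2√-3 + 6(1 - √-3)X). -/
noncomputable def mobius16 (s x : ℂ) : ℂ :=
  (-1 + s + (3 - s) * x) / (2 * s + 6 * (1 - s) * x)

lemma homog (a b c d e f g N q : ℂ) (hq : q ≠ 0) :
    (a * (N / q) ^ 6 + b * (N / q) ^ 5 + c * (N / q) ^ 4 + d * (N / q) ^ 3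
      - e * (N / q) ^ 2 + f * (N / q) + g) * q ^ 6
    = a * N ^ 6 + b * N ^ 5 * q + c * N ^ 4 * q ^ 2 + d * N ^ 3 * q ^ 3
      - e * N ^ 2 * q ^ 4 + f * N * q ^ 5 + g * q ^ 6 := by
  field_simp

/-- the Möbius transformation μ carries F to its conjugate F̄ (obtained
by s ↦ -s): the identity F̄(μ(X))·q(X)⁶ = (24√-3)²·F(X) holds, with
q(X) = 2√-3 + 6(1-√-3)X; this is exactly the constant making Y² = F(X) transform to
Ȳ² = F̄(X̄) under (X,Y) ↦ (μ(X), 24√-3·Y/q(X)³). -/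
theorem sexticF_transforms_to_conjugate
    (s : ℂ) (hs : s ^ 2 = -3) (x : ℂ)
    (hq : 2 * s + 6 * (1 - s) * x ≠ 0) :
    sexticF (-s) (mobius16 s x) * (2 * s + 6 * (1 - s) * x) ^ 6
      = (24 * s) ^ 2 * sexticF s x := by
  rw [show mobius16 s x = (-1 + s + (3 - s) * x) / (2 * s + 6 * (1 - s) * x) from rfl]
  unfold sexticF
  rw [homog _ _ _ _ _ _ _ _ _ hq]
  linear_combination ((4/9:ℂ) + (-8/3:ℂ)*x^1 + (-4:ℂ)*x^2 + (32/3:ℂ)*x^3 + (36:ℂ)*x^4 + (-60:ℂ)*x^6 + (-16/27:ℂ)*s^1 + (-16/3:ℂ)*s^1*x^1 + (128/3:ℂ)*s^1*x^2 + (128/3:ℂ)*s^1*x^3 + (-208:ℂ)*s^1*x^4 + (-240:ℂ)*s^1*x^5 + (384:ℂ)*s^1*x^6 + (16/27:ℂ)*s^2 + (-16:ℂ)*s^2*x^1 + (416/3:ℂ)*s^2*x^2 + (-3712/9:ℂ)*s^2*x^3 + (-176:ℂ)*s^2*x^4 + (1744:ℂ)*s^2*x^5 + (-1184:ℂ)*s^2*x^6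 + (-8/27:ℂ)*s^3 + (16/3:ℂ)*s^3*x^1 + (-136/9:ℂ)*s^3*x^2 + (-1952/9:ℂ)*s^3*x^3 + (1560:ℂ)*s^3*x^4 + (-2704:ℂ)*s^3*x^5 + (3544/3:ℂ)*s^3*x^6 + (4/81:ℂ)*s^4 + (16/9:ℂ)*s^4*x^1 + (-44:ℂ)*s^4*x^2 + (9152/27:ℂ)*s^4*x^3 + (-1108:ℂ)*s^4*x^4 + (3856/3:ℂ)*s^4*x^5 + (-1100/3:ℂ)*s^4*x^6 + (8/81:ℂ)*s^5 + (-64/27:ℂ)*s^5*x^1 + (200/9:ℂ)*s^5*x^2 + (-2752/27:ℂ)*s^5*x^3 + (2008/9:ℂ)*s^5*x^4 + (-512/3:ℂ)*s^5*x^5 + (152/9:ℂ)*s^5*x^6) * hs
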